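/- Let Y be a strictly convex real Banach space. If the pair (c0(⊕_{n=1}^∞ ℓ2^n), Y) has the Bishop-Phelps-Bollobás property for operators, then Y is uniformly convex. -/
import Mathlib


open Filter Topology

noncomputable section

/-- The Euclidean space `ℓ₂ⁿ⁺¹` forming the `n`-th block (so blocks have dimensions 1, 2, 3, …),
i.e. the block `I(n+1)` of the paper. -/
abbrev E2 (n : ℕ) : Type := EuclideanSpace ℝ (Fin (n + 1))

/-- `c₀(⊕ₙ ℓ₂ⁿ)`: the subspace of the `ℓ∞`-sum of the spaces `ℓ₂ⁿ` consisting of those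
elements whose block norms tend to `0`; it carries the norm `‖x‖ = sup_n ‖x n‖`. -/
def c0E2 : Submodule ℝ (lp E2 ⊤) where
  carrier := {x | Tendsto (fun n => ‖x n‖) atTop (𝓝 0)}
  add_mem' := by
    intro x y hx hy
    refine squeeze_zero (fun n => norm_nonneg _) (fun n => ?_) (by simpa using hx.add hy)
    rw [lp.coeFn_add]
    exact norm_add_le _ _
  zero_mem' := by
    simp only [Set.mem_setOf_eq, lp.coeFn_zero, Pi.zero_apply, norm_zero]
    exact tendsto_const_nhds
  smul_mem' := by
    intro c x hx
    have h : ∀ n, ‖(c • x : lp E2 ⊤) n‖ = ‖c‖ * ‖x n‖ := by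
      intro n; rw [lp.coeFn_smul]; simp [norm_smul]
    have := hx.const_mul ‖c‖
    simp only [mul_zero] at this
    exact Tendsto.congr (fun n => (h n).symm) this

/-- The standard unit basis vector of `c₀(⊕ₙ ℓ₂ⁿ)` sitting in block `j` at coordinate `i`. -/
def stdBasis (j : ℕ) (i : Fin (j + 1)) : c0E2 :=
  ⟨lp.single ⊤ j (EuclideanSpace.single i 1), by
    refine Tendsto.congr' ?_ (tendsto_const_nhds : Tendsto (fun _ : ℕ => (0:ℝ)) atTop (𝓝 0))
    filter_upwards [eventually_gt_atTop j] with n hn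
    rw [lp.single_apply_ne ⊤ j _ (by omega : n ≠ j), norm_zero]⟩

lemma euclid_coord_le {m : ℕ} (v : EuclideanSpace ℝ (Fin m)) (i : Fin m) :
    ‖v i‖ ≤ ‖v‖ := by
  rw [EuclideanSpace.norm_eq]
  calc ‖v i‖ = Real.sqrt (‖v i‖ ^ 2) := by rw [Real.sqrt_sq (norm_nonneg _)]
    _ ≤ _ := Real.sqrt_le_sqrt
        (Finset.single_le_sum (f := fun j => ‖v j‖ ^ 2) (fun j _ => sq_nonneg _)
          (Finset.mem_univ i))

lemma c0_coord_le (z : c0E2) (n : ℕ) (i : Fin (n + 1)) :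
    ‖(z : lp E2 ⊤) n i‖ ≤ ‖z‖ := by
  refine le_trans (euclid_coord_le _ i) ?_
  rw [Submodule.coe_norm]
  exact lp.norm_apply_le_norm ENNReal.top_ne_zero (z : lp E2 ⊤) n

lemma stdBasis_coe (j : ℕ) (i : Fin (j + 1)) :
    (stdBasis j i : lp E2 ⊤) = lp.single ⊤ j (EuclideanSpace.single i 1) := rfl

lemma norm_stdBasis (j : ℕ) (i : Fin (j + 1)) : ‖stdBasis j i‖ = 1 := by
  refine le_antisymm ?_ ?_
  · rw [Submodule.coe_norm, stdBasis_coe]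
    refine lp.norm_le_of_forall_le zero_le_one fun n => ?_
    rcases eq_or_ne n j with rfl | hn
    · rw [lp.single_apply_self, EuclideanSpace.norm_single, norm_one]
    · rw [lp.single_apply_ne ⊤ j _ hn, norm_zero]; exact zero_le_one
  · have h := lp.norm_apply_le_norm ENNReal.top_ne_zero
      ((stdBasis j i : c0E2) : lp E2 ⊤) j
    rw [stdBasis_coe, lp.single_apply_self, EuclideanSpace.norm_single, norm_one] at h
    rw [Submodule.coe_norm]
    exact h

/-- A pair `(X, Y)` of normed spaces has the **Bishop–Phelps–Bollobás property for operators**: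
for every `ε > 0` there is `η > 0` such that whenever a norm-one operator `T : X → Y` and a
norm-one vector `x₀` satisfy `‖T x₀‖ > 1 - η`, there are a norm-one vector `u₀` and a norm-one
operator `S` with `‖S u₀‖ = 1`, `‖u₀ - x₀‖ < ε` and `‖S - T‖ < ε`. -/
def HasBPBp (X Y : Type*) [NormedAddCommGroup X] [NormedSpace ℝ X]
    [NormedAddCommGroup Y] [NormedSpace ℝ Y] : Prop :=
  ∀ ε : ℝ, 0 < ε → ∃ η : ℝ, 0 < η ∧
    ∀ (T : X →L[ℝ] Y) (x₀ : X), ‖T‖ = 1 → ‖x₀‖ = 1 → 1 - η < ‖T x₀‖ →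
      ∃ (u₀ : X) (S : X →L[ℝ] Y),
        ‖u₀‖ = 1 ∧ ‖S‖ = 1 ∧ ‖S u₀‖ = 1 ∧ ‖u₀ - x₀‖ < ε ∧ ‖S - T‖ < ε

set_option maxHeartbeats 2000000 in
/-- Theorem 3 of the paper. If `Y` is a strictly convex real Banach space and
the pair `(c₀(⊕ₙ ℓ₂ⁿ), Y)` has the Bishop–Phelps–Bollobás property for operators, then `Y` is
uniformly convex. -/
theorem stmt2 (Y : Type*) [NormedAddCommGroup Y] [NormedSpace ℝ Y]
    [StrictConvexSpace ℝ Y] [CompleteSpace Y]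
    (h : HasBPBp c0E2 Y) : UniformConvexSpace Y := by
  refine ⟨fun ε hε => ?_⟩
  set ε' : ℝ := min ε 1 / 4 with hε'def
  have hmin : 0 < min ε 1 := lt_min hε one_pos
  have hε'pos : 0 < ε' := by rw [hε'def]; linarith
  have hε'lt1 : ε' < 1 := by
    have := min_le_right ε 1; rw [hε'def]; linarith
  obtain ⟨η, hηpos, hBPB⟩ := h ε' hε'pos
  refine ⟨min η 1, lt_min hηpos one_pos, fun x hx y hy hxy => ?_⟩
  by_contra hcon
  push_neg at hcon
  -- hcon : 2 - min η 1 < ‖x + y‖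
  set a : Y := (2:ℝ)⁻¹ • (x + y) with ha
  set b : Y := (2:ℝ)⁻¹ • (x - y) with hb
  have hna : ‖a‖ = ‖x + y‖ / 2 := by
    rw [ha, norm_smul, Real.norm_eq_abs]
    rw [abs_of_nonneg (by norm_num : (0:ℝ) ≤ (2:ℝ)⁻¹)]
    ring
  have hnb : ‖b‖ = ‖x - y‖ / 2 := by
    rw [hb, norm_smul, Real.norm_eq_abs]
    rw [abs_of_nonneg (by norm_num : (0:ℝ) ≤ (2:ℝ)⁻¹)]
    ring
  have hminη : min η 1 ≤ 1 := min_le_right _ _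
  have hna1 : 1 - min η 1 / 2 < ‖a‖ := by rw [hna]; linarith
  have hapos : (0:ℝ) < ‖a‖ := by linarith
  have hblow : 2 * ε' ≤ ‖b‖ := by
    have h1 : min ε 1 ≤ ‖x - y‖ := le_trans (min_le_left _ _) hxy
    rw [hnb, hε'def]; linarith
  -- the key norm inequality
  have keybound : ∀ s t : ℝ, ‖s • a + t • b‖ ≤ |s + t| / 2 + |s - t| / 2 := by
    intro s t
    have hrw : s • a + t • b = ((s + t) / 2) • x + ((s - t) / 2) • y := by
      rw [ha, hb]
      module
    rw [hrw]
    calc ‖((s + t) / 2) • x + ((s - t) / 2) • y‖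
        ≤ ‖((s + t) / 2) • x‖ + ‖((s - t) / 2) • y‖ := norm_add_le _ _
      _ = |s + t| / 2 + |s - t| / 2 := by
          rw [norm_smul, norm_smul, hx, hy, mul_one, mul_one, Real.norm_eq_abs,
            Real.norm_eq_abs, abs_div, abs_div]
          norm_num
  have halfmax : ∀ s t c : ℝ, |s| ≤ c → |t| ≤ c → |s + t| / 2 + |s - t| / 2 ≤ c := by
    intro s t c hs ht
    rw [abs_le] at hs ht
    rcases le_total 0 (s + t) with h1 | h1 <;> rcases le_total 0 (s - t) with h2 | h2
    · rw [abs_of_nonneg h1, abs_of_nonneg h2]; linarith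
    · rw [abs_of_nonneg h1, abs_of_nonpos h2]; linarith
    · rw [abs_of_nonpos h1, abs_of_nonneg h2]; linarith
    · rw [abs_of_nonpos h1, abs_of_nonpos h2]; linarith
  -- the operator T
  obtain ⟨T, hTapp, hTnorm_le⟩ :
      ∃ T : c0E2 →L[ℝ] Y,
        (∀ z : c0E2, T z = ((z : lp E2 ⊤) 0 0) • a + ((z : lp E2 ⊤) 1 0) • b) ∧ ‖T‖ ≤ 1 := by
    have hTbound : ∀ z : c0E2,
        ‖((z : lp E2 ⊤) 0 0) • a + ((z : lp E2 ⊤) 1 0) • b‖ ≤ 1 * ‖z‖ := by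
      intro z
      rw [one_mul]
      have hs : |(z : lp E2 ⊤) 0 0| ≤ ‖z‖ := by
        have := c0_coord_le z 0 0; rwa [Real.norm_eq_abs] at this
      have ht : |(z : lp E2 ⊤) 1 0| ≤ ‖z‖ := by
        have := c0_coord_le z 1 0; rwa [Real.norm_eq_abs] at this
      exact le_trans (keybound _ _) (halfmax _ _ _ hs ht)
    refine ⟨LinearMap.mkContinuous
      { toFun := fun z => ((z : lp E2 ⊤) 0 0) • a + ((z : lp E2 ⊤) 1 0) • b
        map_add' := fun p q => by
          simp only [Submodule.coe_add, lp.coeFn_add, Pi.add_apply, PiLp.add_apply, add_smul]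
          abel
        map_smul' := fun c p => by
          simp only [Submodule.coe_smul, lp.coeFn_smul, Pi.smul_apply, PiLp.smul_apply,
            smul_eq_mul, RingHom.id_apply, smul_add, mul_smul] } 1 hTbound,
      fun z => rfl, LinearMap.mkContinuous_norm_le _ zero_le_one _⟩
  clear keybound halfmax
  -- T at the two basis vectors
  have hc00 : ((stdBasis 0 0 : c0E2) : lp E2 ⊤) 0 0 = 1 := by
    rw [stdBasis_coe, lp.single_apply_self, EuclideanSpace.single_apply]
    simp
  have hc01 : ((stdBasis 0 0 : c0E2) : lp E2 ⊤) 1 0 = 0 := by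
    rw [stdBasis_coe, lp.single_apply_ne ⊤ 0 _ (by norm_num : (1:ℕ) ≠ 0)]
    rfl
  have hc10 : ((stdBasis 1 0 : c0E2) : lp E2 ⊤) 0 0 = 0 := by
    rw [stdBasis_coe, lp.single_apply_ne ⊤ 1 _ (by norm_num : (0:ℕ) ≠ 1)]
    rfl
  have hc11 : ((stdBasis 1 0 : c0E2) : lp E2 ⊤) 1 0 = 1 := by
    rw [stdBasis_coe, lp.single_apply_self, EuclideanSpace.single_apply]
    simp
  have hTx₀ : T (stdBasis 0 0) = a := by
    rw [hTapp, hc00, hc01, one_smul, zero_smul, add_zero]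
  have hTg : T (stdBasis 1 0) = b := by
    rw [hTapp, hc10, hc11, one_smul, zero_smul, zero_add]
  have hTnorm_ge : ‖a‖ ≤ ‖T‖ := by
    have := T.le_opNorm (stdBasis 0 0)
    rwa [hTx₀, norm_stdBasis, mul_one] at this
  have hTpos : 0 < ‖T‖ := lt_of_lt_of_le hapos hTnorm_ge
  have h1T : 1 ≤ ‖T‖⁻¹ := by
    calc (1:ℝ) = ‖T‖ * ‖T‖⁻¹ := (mul_inv_cancel₀ hTpos.ne').symm
      _ ≤ 1 * ‖T‖⁻¹ := mul_le_mul_of_nonneg_right hTnorm_le (inv_nonneg.2 hTpos.le)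
      _ = ‖T‖⁻¹ := one_mul _
  obtain ⟨T', hT'app, hT'norm⟩ :
      ∃ T' : c0E2 →L[ℝ] Y, (∀ z : c0E2, T' z = ‖T‖⁻¹ • T z) ∧ ‖T'‖ = 1 := by
    refine ⟨‖T‖⁻¹ • T, fun z => ContinuousLinearMap.smul_apply _ _ _, le_antisymm ?_ ?_⟩
    · refine ContinuousLinearMap.opNorm_le_bound _ zero_le_one fun z => ?_
      rw [ContinuousLinearMap.smul_apply, norm_smul, Real.norm_eq_abs,
        abs_of_nonneg (inv_nonneg.2 hTpos.le), one_mul]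
      calc ‖T‖⁻¹ * ‖T z‖ ≤ ‖T‖⁻¹ * (‖T‖ * ‖z‖) :=
            mul_le_mul_of_nonneg_left (T.le_opNorm z) (inv_nonneg.2 hTpos.le)
        _ = ‖z‖ := by field_simp
    · have h1 : ‖T‖ ≤ ‖T‖ * ‖(‖T‖⁻¹ • T : c0E2 →L[ℝ] Y)‖ := by
        refine ContinuousLinearMap.opNorm_le_bound _ (by positivity) fun z => ?_
        have h2 : ‖(‖T‖⁻¹ • T : c0E2 →L[ℝ] Y) z‖ ≤ ‖(‖T‖⁻¹ • T : c0E2 →L[ℝ] Y)‖ * ‖z‖ :=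
          ContinuousLinearMap.le_opNorm _ z
        rw [ContinuousLinearMap.smul_apply, norm_smul, Real.norm_eq_abs,
          abs_of_nonneg (inv_nonneg.2 hTpos.le)] at h2
        calc ‖T z‖ = ‖T‖ * (‖T‖⁻¹ * ‖T z‖) := by field_simp
          _ ≤ ‖T‖ * (‖(‖T‖⁻¹ • T : c0E2 →L[ℝ] Y)‖ * ‖z‖) :=
              mul_le_mul_of_nonneg_left h2 hTpos.le
          _ = ‖T‖ * ‖(‖T‖⁻¹ • T : c0E2 →L[ℝ] Y)‖ * ‖z‖ := by ring
      nlinarith [hTpos]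
  have hT'x₀ : 1 - η < ‖T' (stdBasis 0 0)‖ := by
    rw [hT'app, hTx₀, norm_smul, Real.norm_eq_abs, abs_of_nonneg (inv_nonneg.2 hTpos.le)]
    have h2 : ‖a‖ ≤ ‖T‖⁻¹ * ‖a‖ := by
      calc ‖a‖ = 1 * ‖a‖ := (one_mul _).symm
        _ ≤ ‖T‖⁻¹ * ‖a‖ := mul_le_mul_of_nonneg_right h1T (norm_nonneg _)
    have h3 : min η 1 ≤ η := min_le_left _ _
    linarith
  obtain ⟨u₀, S, hu₀, hS, hSu₀, hu₀x₀, hST⟩ :=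
    hBPB T' (stdBasis 0 0) hT'norm (norm_stdBasis 0 0) hT'x₀
  -- the block-1 component of u₀ is small
  have hu₀1 : ‖(u₀ : lp E2 ⊤) 1‖ < ε' := by
    have h1 : ‖((u₀ - stdBasis 0 0 : c0E2) : lp E2 ⊤) 1‖ ≤ ‖u₀ - (stdBasis 0 0 : c0E2)‖ := by
      rw [Submodule.coe_norm]
      exact lp.norm_apply_le_norm ENNReal.top_ne_zero _ 1
    have h2 : ((u₀ - stdBasis 0 0 : c0E2) : lp E2 ⊤) 1 = (u₀ : lp E2 ⊤) 1 := by
      rw [Submodule.coe_sub, lp.coeFn_sub, Pi.sub_apply, stdBasis_coe,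
        lp.single_apply_ne ⊤ 0 _ (by norm_num : (1:ℕ) ≠ 0), sub_zero]
    rw [h2] at h1
    exact lt_of_le_of_lt h1 hu₀x₀
  -- the perturbation w
  set w : c0E2 := (1 - ε') • stdBasis 1 0 with hw
  have hw_coe : (w : lp E2 ⊤)
      = (1 - ε') • (lp.single (E := E2) ⊤ 1 (EuclideanSpace.single 0 1)) := by
    rw [hw, Submodule.coe_smul, stdBasis_coe]
  have hpert : ∀ σ : ℝ, |σ| = 1 → ‖u₀ + σ • w‖ ≤ 1 := by
    intro σ hσ
    rw [Submodule.coe_norm]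
    refine lp.norm_le_of_forall_le zero_le_one fun n => ?_
    have hcoe : ((u₀ + σ • w : c0E2) : lp E2 ⊤) n = (u₀ : lp E2 ⊤) n + σ • (w : lp E2 ⊤) n := by
      rw [Submodule.coe_add, Submodule.coe_smul, lp.coeFn_add, Pi.add_apply,
        lp.coeFn_smul, Pi.smul_apply]
    rw [hcoe]
    rcases eq_or_ne n 1 with rfl | hn
    · have hwn : (w : lp E2 ⊤) 1 = (1 - ε') • (EuclideanSpace.single (0 : Fin 2) 1) := by
        rw [hw_coe, lp.coeFn_smul, Pi.smul_apply, lp.single_apply_self]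
      calc ‖(u₀ : lp E2 ⊤) 1 + σ • (w : lp E2 ⊤) 1‖
          ≤ ‖(u₀ : lp E2 ⊤) 1‖ + ‖σ • (w : lp E2 ⊤) 1‖ := norm_add_le _ _
        _ ≤ ε' + (1 - ε') := by
            refine add_le_add hu₀1.le ?_
            rw [hwn, norm_smul, norm_smul, Real.norm_eq_abs, hσ, one_mul,
              Real.norm_eq_abs, abs_of_nonneg (by linarith : (0:ℝ) ≤ 1 - ε'),
              EuclideanSpace.norm_single, norm_one, mul_one]
        _ = 1 := by ring
    · have hwn : (w : lp E2 ⊤) n = 0 := by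
        rw [hw_coe, lp.coeFn_smul, Pi.smul_apply, lp.single_apply_ne ⊤ 1 _ hn, smul_zero]
      rw [hwn, smul_zero, add_zero]
      have := lp.norm_apply_le_norm ENNReal.top_ne_zero (u₀ : lp E2 ⊤) n
      rw [← Submodule.coe_norm, hu₀] at this
      exact this
  -- strict convexity forces S w = 0
  have hp : ‖S (u₀ + w)‖ ≤ 1 := by
    have h1 : ‖u₀ + w‖ ≤ 1 := by
      have := hpert 1 (by norm_num)
      rwa [one_smul] at this
    calc ‖S (u₀ + w)‖ ≤ ‖S‖ * ‖u₀ + w‖ := S.le_opNorm _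
      _ ≤ 1 := by rw [hS, one_mul]; exact h1
  have hq : ‖S (u₀ - w)‖ ≤ 1 := by
    have h1 : ‖u₀ - w‖ ≤ 1 := by
      have := hpert (-1) (by norm_num)
      rwa [neg_one_smul, ← sub_eq_add_neg] at this
    calc ‖S (u₀ - w)‖ ≤ ‖S‖ * ‖u₀ - w‖ := S.le_opNorm _
      _ ≤ 1 := by rw [hS, one_mul]; exact h1
  have hsum_eq : S (u₀ + w) + S (u₀ - w) = S u₀ + S u₀ := by
    have huw : (u₀ + w) + (u₀ - w) = u₀ + u₀ := by abel
    rw [← map_add, huw, map_add]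
  have hsum_norm : ‖S (u₀ + w) + S (u₀ - w)‖ = 2 := by
    rw [hsum_eq]
    calc ‖S u₀ + S u₀‖ = ‖(2:ℝ) • S u₀‖ := by rw [two_smul]
      _ = 2 := by
          rw [norm_smul, Real.norm_eq_abs, hSu₀, mul_one]
          norm_num
  have hpq : S (u₀ + w) = S (u₀ - w) := by
    have h2 : 2 ≤ ‖S (u₀ + w)‖ + ‖S (u₀ - w)‖ := by
      rw [← hsum_norm]; exact norm_add_le _ _
    have hpn : ‖S (u₀ + w)‖ = 1 := by linarith
    have hqn : ‖S (u₀ - w)‖ = 1 := by linarith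
    refine eq_of_norm_eq_of_norm_add_eq (by rw [hpn, hqn]) ?_
    rw [hsum_norm, hpn, hqn]
    norm_num
  have hSw : S w = 0 := by
    have h1 : S u₀ + S w = S u₀ + -(S w) := by
      rw [← map_add, ← sub_eq_add_neg, ← map_sub]
      exact hpq
    have h2 : S w = -(S w) := add_left_cancel h1
    have h3 : (2:ℝ) • S w = 0 := by
      rw [two_smul]
      nth_rewrite 2 [h2]
      exact add_neg_cancel _
    rcases smul_eq_zero.mp h3 with h4 | h4
    · norm_num at h4
    · exact h4
  have hSg : S (stdBasis 1 0) = 0 := by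
    rw [hw, map_smul] at hSw
    rcases smul_eq_zero.mp hSw with h4 | h4
    · exfalso; rw [sub_eq_zero] at h4; linarith [h4.symm]
    · exact h4
  -- final contradiction
  have hfin1 : ‖(S - T') (stdBasis 1 0)‖ ≤ ‖S - T'‖ := by
    have h5 := (S - T').le_opNorm (stdBasis 1 0)
    rwa [norm_stdBasis, mul_one] at h5
  have hfin2 : ‖(S - T') (stdBasis 1 0)‖ = ‖T' (stdBasis 1 0)‖ := by
    rw [ContinuousLinearMap.sub_apply, hSg, zero_sub, norm_neg]
  have hT'g : ‖T' (stdBasis 1 0)‖ = ‖T‖⁻¹ * ‖b‖ := by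
    rw [hT'app, hTg, norm_smul, Real.norm_eq_abs, abs_of_nonneg (inv_nonneg.2 hTpos.le)]
  have hbineq : ‖b‖ ≤ ‖T‖⁻¹ * ‖b‖ := by
    calc ‖b‖ = 1 * ‖b‖ := (one_mul _).symm
      _ ≤ ‖T‖⁻¹ * ‖b‖ := mul_le_mul_of_nonneg_right h1T (norm_nonneg _)
  rw [hfin2, hT'g] at hfin1
  linarith
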